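/- Suppose that m ≥ 3, that R = (R_ij) is symmetric, that the pointwise gradient Einstein-type equation holds with α ≠ 0, and set T = H_tt (the trace of H, i.e. Δf). Then for all i, j, k: D_ijk = (β/α) [ (1/(m−2))(f_j H_ik − f_k H_ij) + (1/((m−1)(m−2))) f_t (H_tj δ_ik − H_tk δ_ij) − (T/((m−1)(m−2)))(f_j δ_ik − f_k δ_ij) ]. -/

import Mathlib

open Finset

/-- Kronecker delta. -/
noncomputable def kdelta {m : ℕ} (i j : Fin m) : ℝ := if i = j then 1 else 0

/-- The 3-tensor `D` built from the Ricci components `R` and the gradient components `f`. -/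
noncomputable def Dt (m : ℕ) (R : Fin m → Fin m → ℝ) (f : Fin m → ℝ)
    (i j k : Fin m) : ℝ :=
  (1 / ((m : ℝ) - 2)) * (f k * R i j - f j * R i k)
  + (1 / (((m : ℝ) - 1) * ((m : ℝ) - 2))) *
      ∑ t, f t * (R t k * kdelta i j - R t j * kdelta i k)
  - ((∑ t, R t t) / (((m : ℝ) - 1) * ((m : ℝ) - 2))) *
      (f k * kdelta i j - f j * kdelta i k)

/-- under the pointwise gradient Einstein-type equation with `α ≠ 0`,
the tensor `D` can be expressed through the Hessian components `H` and its trace `T`. -/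
theorem D_via_Hessian (m : ℕ) (hm : 3 ≤ m)
    (R H : Fin m → Fin m → ℝ)
    (hR : ∀ i j, R i j = R j i) (hH : ∀ i j, H i j = H j i)
    (f : Fin m → ℝ) (α β μ ρ lam : ℝ) (hα : α ≠ 0)
    (heq : ∀ i j, α * R i j + β * H i j + μ * f i * f j
      = (ρ * (∑ t, R t t) + lam) * kdelta i j)
    (T : ℝ) (hT : T = ∑ t, H t t) :
    ∀ i j k, Dt m R f i j k = (β / α) *
      ((1 / ((m : ℝ) - 2)) * (f j * H i k - f k * H i j)
        + (1 / (((m : ℝ) - 1) * ((m : ℝ) - 2))) *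
            ∑ t, f t * (H t j * kdelta i k - H t k * kdelta i j)
        - (T / (((m : ℝ) - 1) * ((m : ℝ) - 2))) *
            (f j * kdelta i k - f k * kdelta i j)) := by
  intro i j k
  set S : ℝ := ∑ t, R t t with hS
  set c : ℝ := ρ * S + lam with hc
  set F : ℝ := ∑ t, f t * f t with hF
  set G : Fin m → ℝ := fun k => ∑ t, f t * H t k with hG
  have hm1 : ((m : ℝ) - 1) ≠ 0 := by
    have : (3 : ℝ) ≤ (m : ℝ) := by exact_mod_cast hm
    intro h; nlinarith
  have hm2 : ((m : ℝ) - 2) ≠ 0 := by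
    have : (3 : ℝ) ≤ (m : ℝ) := by exact_mod_cast hm
    intro h; nlinarith
  have heq' : ∀ a b, α * R a b = c * kdelta a b - β * H a b - μ * f a * f b := by
    intro a b
    have h := heq a b
    linarith
  have hRform : ∀ a b, R a b = (c * kdelta a b - β * H a b - μ * f a * f b) / α := by
    intro a b
    rw [eq_div_iff hα, mul_comm]
    exact heq' a b
  have hδsum : ∀ k : Fin m, ∑ t, f t * kdelta t k = f k := by
    intro k
    simp [kdelta]
  have hcard : ∑ _t : Fin m, c = c * m := by
    simp [Finset.sum_const, mul_comm]
  have htrace : α * S + β * T + μ * F = c * m := by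
    have h1 : ∑ t, (α * R t t + β * H t t + μ * f t * f t) = ∑ t : Fin m, c * kdelta t t := by
      refine Finset.sum_congr rfl fun t _ => ?_
      exact heq t t
    have h2 : ∑ t : Fin m, c * kdelta t t = c * m := by
      simp [kdelta, Finset.sum_const, mul_comm]
    have h3 : ∑ t, (α * R t t + β * H t t + μ * f t * f t)
        = α * S + β * T + μ * F := by
      rw [hS, hT, hF, Finset.mul_sum, Finset.mul_sum, Finset.mul_sum,
        ← Finset.sum_add_distrib, ← Finset.sum_add_distrib]
      exact Finset.sum_congr rfl fun t _ => by ring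
    rw [← h3, h1, h2]
  have hfR : ∀ k : Fin m, ∑ t, f t * R t k = (c * f k - β * G k - μ * F * f k) / α := by
    intro k
    have h1 : ∀ t : Fin m, f t * R t k
        = (c * (f t * kdelta t k) - β * (f t * H t k) - (μ * f k) * (f t * f t)) / α := by
      intro t
      rw [hRform t k]
      field_simp
    rw [Finset.sum_congr rfl fun t _ => h1 t, ← Finset.sum_div]
    congr 1
    rw [Finset.sum_sub_distrib, Finset.sum_sub_distrib, ← Finset.mul_sum, ← Finset.mul_sum,
      ← Finset.mul_sum, hδsum]
    simp only [hG, hF]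
    ring
  have hsplit : ∑ t, f t * (R t k * kdelta i j - R t j * kdelta i k)
      = (∑ t, f t * R t k) * kdelta i j - (∑ t, f t * R t j) * kdelta i k := by
    rw [Finset.sum_congr rfl (fun t _ => show f t * (R t k * kdelta i j - R t j * kdelta i k)
      = (f t * R t k) * kdelta i j - (f t * R t j) * kdelta i k by ring)]
    rw [Finset.sum_sub_distrib, ← Finset.sum_mul, ← Finset.sum_mul]
  have hsplitH : ∑ t, f t * (H t j * kdelta i k - H t k * kdelta i j)
      = G j * kdelta i k - G k * kdelta i j := by
    rw [Finset.sum_congr rfl (fun t _ => show f t * (H t j * kdelta i k - H t k * kdelta i j)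
      = (f t * H t j) * kdelta i k - (f t * H t k) * kdelta i j by ring)]
    rw [Finset.sum_sub_distrib, ← Finset.sum_mul, ← Finset.sum_mul]
  have hSval : S = (c * m - β * T - μ * F) / α := by
    rw [eq_div_iff hα, mul_comm]
    linarith
  rw [Dt, hsplit, hsplitH, ← hS, hSval, hfR k, hfR j, hRform i j, hRform i k]
  field_simp
  ring
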